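/- Let P : ℂ → ℂ be a monic polynomial of degree D ≥ 2. Then the complement ℂ ∖ K_P of its filled Julia set is a connected subset of ℂ. -/
import Mathlib

open Filter Topology

-- aux 1: norm of eval bounded by sum of coeff norms times power
lemma eval_norm_le (Q : Polynomial ℂ) {z : ℂ} (hz : 1 ≤ ‖z‖) :
    ‖Q.eval z‖ ≤ (∑ i ∈ Finset.range (Q.natDegree + 1), ‖Q.coeff i‖) * ‖z‖ ^ Q.natDegree := by
  rw [Polynomial.eval_eq_sum_range, Finset.sum_mul]
  refine (norm_sum_le _ _).trans (Finset.sum_le_sum fun i hi => ?_)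
  rw [norm_mul, norm_pow]
  exact mul_le_mul_of_nonneg_left
    (pow_le_pow_right₀ hz (Nat.lt_succ_iff.mp (Finset.mem_range.mp hi))) (norm_nonneg _)

-- aux 2: path connectedness of the exterior of a ball in ℂ
lemma exterior_pathConnected {R : ℝ} (hR : 0 ≤ R) :
    IsPathConnected {z : ℂ | R < ‖z‖} := by
  have hrank : 1 < Module.rank ℝ ℂ := by
    rw [Complex.rank_real_complex]; exact_mod_cast Nat.one_lt_ofNat
  have hsph : IsPathConnected (Metric.sphere (0:ℂ) (R+1)) :=
    isPathConnected_sphere hrank 0 (by linarith)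
  have hsubset : Metric.sphere (0:ℂ) (R+1) ⊆ {z : ℂ | R < ‖z‖} := by
    intro x hx
    rw [mem_sphere_zero_iff_norm] at hx
    simp only [Set.mem_setOf_eq, hx]; linarith
  have ha : ((R:ℂ)+1) ∈ Metric.sphere (0:ℂ) (R+1) := by
    rw [mem_sphere_zero_iff_norm]
    rw [show ((R:ℂ)+1) = ((R+1 : ℝ) : ℂ) by push_cast; ring, Complex.norm_real,
      Real.norm_eq_abs, abs_of_pos (by linarith)]
  refine ⟨(R:ℂ)+1, hsubset ha, ?_⟩
  intro b hb
  simp only [Set.mem_setOf_eq] at hb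
  have hbpos : 0 < ‖b‖ := lt_of_le_of_lt hR hb
  set c : ℝ := (R+1)/‖b‖ with hc
  have hcpos : 0 < c := div_pos (by linarith) hbpos
  have hb' : ‖c • b‖ = R + 1 := by
    rw [norm_smul, Real.norm_eq_abs, abs_of_pos hcpos, hc, div_mul_cancel₀]
    exact ne_of_gt hbpos
  -- join b to c • b along the segment
  have hseg : segment ℝ b (c • b) ⊆ {z : ℂ | R < ‖z‖} := by
    rintro x ⟨u, v, hu, hv, huv, rfl⟩
    have : u • b + v • (c • b) = (u + v * c) • b := by
      rw [smul_smul, add_smul]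
    rw [this]
    simp only [Set.mem_setOf_eq]
    rw [norm_smul, Real.norm_eq_abs, abs_of_nonneg (by positivity)]
    have h1 : u * ‖b‖ + v * (R+1) ≤ (u + v * c) * ‖b‖ := by
      rw [add_mul, mul_assoc, hc, div_mul_cancel₀ _ (ne_of_gt hbpos)]
    have h2 : u * R ≤ u * ‖b‖ := mul_le_mul_of_nonneg_left hb.le hu
    rcases hv.eq_or_lt with rfl | hv'
    · have hu1 : u = 1 := by linarith
      subst hu1
      nlinarith
    · nlinarith
  have j1 : JoinedIn {z : ℂ | R < ‖z‖} b (c • b) := by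
    have := (convex_segment b (c • b)).isPathConnected ⟨b, left_mem_segment ℝ b (c • b)⟩
    exact (this.joinedIn b (left_mem_segment ℝ b (c • b)) (c • b)
      (right_mem_segment ℝ b (c • b))).mono hseg
  have j2 : JoinedIn {z : ℂ | R < ‖z‖} (c • b) ((R:ℂ)+1) := by
    refine (hsph.joinedIn (c • b) ?_ ((R:ℂ)+1) ha).mono hsubset
    rwa [mem_sphere_zero_iff_norm]
  exact (j1.trans j2).symm

-- aux 3: escape radius
lemma escape_radius (D : ℕ) (hD : 2 ≤ D) (P : Polynomial ℂ)
    (hmonic : P.Monic) (hdeg : P.natDegree = D) :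
    ∃ R : ℝ, 1 ≤ R ∧ ∀ z : ℂ, R ≤ ‖z‖ → ‖z‖ + 1 ≤ ‖P.eval z‖ := by
  set Q : Polynomial ℂ := P - Polynomial.X ^ D with hQ
  have hP0 : P ≠ 0 := hmonic.ne_zero
  have hPdeg : P.degree = (D : ℕ) := by
    rw [Polynomial.degree_eq_natDegree hP0, hdeg]
  have hQlt : Q.degree < P.degree := by
    apply Polynomial.degree_sub_lt _ hP0
    · rw [hmonic.leadingCoeff, Polynomial.leadingCoeff_X_pow]
    · rw [hPdeg, Polynomial.degree_X_pow]
  have hQnat : Q.natDegree ≤ D - 1 := by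
    rcases eq_or_ne Q 0 with h | h
    · simp [h]
    · have := Polynomial.natDegree_lt_natDegree h hQlt
      omega
  set Csum : ℝ := ∑ i ∈ Finset.range (Q.natDegree + 1), ‖Q.coeff i‖ with hCsum
  have hC0 : 0 ≤ Csum := Finset.sum_nonneg fun i _ => norm_nonneg _
  refine ⟨max 1 (Csum + 2), le_max_left _ _, fun z hz => ?_⟩
  have hz1 : 1 ≤ ‖z‖ := le_trans (le_max_left _ _) hz
  have hzC : Csum + 2 ≤ ‖z‖ := le_trans (le_max_right _ _) hz
  have hQev : ‖Q.eval z‖ ≤ Csum * ‖z‖ ^ (D - 1) := by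
    refine (eval_norm_le Q hz1).trans ?_
    exact mul_le_mul_of_nonneg_left (pow_le_pow_right₀ hz1 hQnat) hC0
  have hPz : P.eval z = z ^ D + Q.eval z := by
    simp [hQ]
  have hpow : ‖z‖ ≤ ‖z‖ ^ (D - 1) := by
    calc ‖z‖ = ‖z‖ ^ 1 := (pow_one _).symm
    _ ≤ ‖z‖ ^ (D - 1) := pow_le_pow_right₀ hz1 (by omega)
  have hDsplit : ‖z‖ ^ D = ‖z‖ ^ (D - 1) * ‖z‖ := by
    rw [← pow_succ]
    congr 1
    omega
  have hnorm : ‖z‖ ^ D - ‖Q.eval z‖ ≤ ‖P.eval z‖ := by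
    rw [hPz]
    have h1 : ‖z ^ D‖ ≤ ‖z ^ D + Q.eval z‖ + ‖Q.eval z‖ := norm_le_add_norm_add _ _
    rw [norm_pow] at h1
    linarith
  have hfact : ‖z‖ ^ (D - 1) * 2 ≤ ‖z‖ ^ (D - 1) * (‖z‖ - Csum) := by
    apply mul_le_mul_of_nonneg_left (by linarith) (by positivity)
  nlinarith [hpow, hQev, hnorm, hDsplit, hfact]

/-- The complement of the filled Julia set is connected. -/
theorem complement_filled_julia_connected (D : ℕ) (hD : 2 ≤ D) (P : Polynomial ℂ)
    (hmonic : P.Monic) (hdeg : P.natDegree = D) :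
    IsConnected {z : ℂ |
        Bornology.IsBounded (Set.range fun n : ℕ => (fun w => P.eval w)^[n] z)}ᶜ := by
  obtain ⟨R, hR1, hResc⟩ := escape_radius D hD P hmonic hdeg
  set f : ℂ → ℂ := fun w => P.eval w with hf
  set K : Set ℂ := {z : ℂ | Bornology.IsBounded (Set.range fun n : ℕ => f^[n] z)} with hKdef
  have hcont : Continuous f := P.continuous
  have hdiff : Differentiable ℂ f := P.differentiable
  -- growth along orbits starting outside radius R
  have hgrow : ∀ z : ℂ, R ≤ ‖z‖ → ∀ n : ℕ, ‖z‖ + n ≤ ‖f^[n] z‖ := by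
    intro z hz n
    induction n with
    | zero => simp
    | succ n ih =>
      have h1 : R ≤ ‖f^[n] z‖ := le_trans hz (by linarith [Nat.cast_nonneg (α := ℝ) n])
      rw [Function.iterate_succ_apply']
      have h2 := hResc _ h1
      push_cast
      linarith
  -- points with bounded orbit stay within radius R forever
  have hK : ∀ z : ℂ, z ∈ K → ∀ n, ‖f^[n] z‖ < R := by
    intro z hz n
    by_contra h
    push_neg at h
    have hz' : Bornology.IsBounded (Set.range fun n : ℕ => f^[n] z) := hz
    obtain ⟨C, hC⟩ := isBounded_iff_forall_norm_le.mp hz'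
    obtain ⟨m, hm⟩ := exists_nat_gt (C - ‖f^[n] z‖)
    have h3 := hgrow _ h m
    rw [← Function.iterate_add_apply] at h3
    have h4 := hC _ (Set.mem_range_self (m + n))
    linarith
  -- K is closed
  have hKeq : K = ⋂ n : ℕ, (f^[n]) ⁻¹' Metric.closedBall 0 R := by
    ext z
    simp only [hKdef, Set.mem_setOf_eq, Set.mem_iInter, Set.mem_preimage,
      Metric.mem_closedBall, dist_zero_right]
    constructor
    · intro h n; exact (hK z h n).le
    · intro h
      refine (Metric.isBounded_closedBall (x := (0:ℂ)) (r := R)).subset ?_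
      rintro x ⟨n, rfl⟩
      simpa [dist_zero_right] using h n
  have hKclosed : IsClosed K := by
    rw [hKeq]
    exact isClosed_iInter fun n => Metric.isClosed_closedBall.preimage (hcont.iterate n)
  have hSopen : IsOpen Kᶜ := hKclosed.isOpen_compl
  -- the exterior is in the complement
  have hE : {z : ℂ | R < ‖z‖} ⊆ Kᶜ := by
    intro z hz hbdd
    have := hK z hbdd 0
    simp only [Function.iterate_zero, id_eq] at this
    exact absurd hz (not_lt.mpr this.le)
  -- every connected component of the complement reaches the exterior
  have hcomp : ∀ y ∈ Kᶜ, ∃ w ∈ connectedComponentIn Kᶜ y, R < ‖w‖ := by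
    intro y hy
    by_contra h
    push_neg at h
    set C := connectedComponentIn Kᶜ y with hCdef
    have hCopen : IsOpen C := hSopen.connectedComponentIn
    have hCsub : C ⊆ Metric.closedBall 0 R := fun w hw => by
      simpa [dist_zero_right] using h w hw
    have hCbdd : Bornology.IsBounded C := Metric.isBounded_closedBall.subset hCsub
    have hyC : y ∈ C := mem_connectedComponentIn hy
    have hfront : frontier C ⊆ K := by
      intro w hw
      by_contra hwK
      have hwS : w ∈ Kᶜ := hwK
      have hwopen : IsOpen (connectedComponentIn Kᶜ w) := hSopen.connectedComponentIn
      have hwmem : w ∈ connectedComponentIn Kᶜ w := mem_connectedComponentIn hwS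
      have hclos : w ∈ closure C := hw.1
      obtain ⟨t, ht1, ht2⟩ := mem_closure_iff.mp hclos _ hwopen hwmem
      have heqC : connectedComponentIn Kᶜ w = C := by
        rw [connectedComponentIn_eq ht1, hCdef, connectedComponentIn_eq (x := y) ht2]
      have hwC : w ∈ C := heqC ▸ hwmem
      rw [hCopen.frontier_eq] at hw
      exact hw.2 hwC
    have hyK : y ∈ K := by
      refine (Metric.isBounded_closedBall (x := (0:ℂ)) (r := R)).subset ?_
      rintro x ⟨n, rfl⟩
      simp only [Metric.mem_closedBall, dist_zero_right]
      refine Complex.norm_le_of_forall_mem_frontier_norm_le hCbdd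
        ((hdiff.iterate n).diffContOnCl) (fun w hw => ?_) (subset_closure hyC)
      exact (hK w (hfront hw) n).le
    exact hy hyK
  -- assemble
  have hx0 : ((R : ℂ) + 1) ∈ {z : ℂ | R < ‖z‖} := by
    simp only [Set.mem_setOf_eq]
    rw [show ((R:ℂ)+1) = ((R+1 : ℝ) : ℂ) by push_cast; ring, Complex.norm_real,
      Real.norm_eq_abs, abs_of_pos (by linarith)]
    linarith
  have hEpre : IsPreconnected {z : ℂ | R < ‖z‖} :=
    (exterior_pathConnected (by linarith)).isConnected.isPreconnected
  constructor
  · exact ⟨(R : ℂ) + 1, hE hx0⟩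
  · refine isPreconnected_of_forall ((R : ℂ) + 1) fun y hy => ?_
    obtain ⟨w, hw1, hw2⟩ := hcomp y hy
    refine ⟨connectedComponentIn Kᶜ y ∪ {z : ℂ | R < ‖z‖},
      Set.union_subset (connectedComponentIn_subset _ _) hE,
      Or.inr hx0, Or.inl (mem_connectedComponentIn hy), ?_⟩
    exact IsPreconnected.union w hw1 hw2 isPreconnected_connectedComponentIn hEpre
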